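/- If a holomorphic function g on the unit disc has bounded imaginary part, |Im g(z)| ≤ A, then there exist constants B, C > 0 (depending on g(0) and A) such that |g(z)| ≤ B + C·log((1+|z|)/(1-|z|)) for all z in the disc. -/

import Mathlib

open Complex Metric

lemma deriv_bound_aux (g : ℂ → ℂ) (A : ℝ)
    (hg : DifferentiableOn ℂ g (ball (0:ℂ) 1))
    (hIm : ∀ z ∈ ball (0:ℂ) 1, |(g z).im| ≤ A) :
    ∀ w ∈ ball (0:ℂ) 1,
      ‖deriv g w‖ ≤ 2 * Real.exp (2 * A) / (1 - ‖w‖) := by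
  intro w hw
  rw [mem_ball_zero_iff] at hw
  set r : ℝ := (1 - ‖w‖) / 2 with hr_def
  have hr : 0 < r := by
    have : ‖w‖ < 1 := hw
    simp only [hr_def]; linarith
  have hsub : closedBall w r ⊆ ball (0:ℂ) 1 := by
    intro x hx
    rw [mem_closedBall, dist_eq] at hx
    rw [mem_ball_zero_iff]
    calc ‖x‖ = ‖x - w + w‖ := by ring_nf
      _ ≤ ‖x - w‖ + ‖w‖ := norm_add_le _ _
      _ ≤ r + ‖w‖ := by linarith
      _ < 1 := by simp only [hr_def]; linarith
  set h : ℂ → ℂ := fun x => Complex.exp (I * g x) with hh_def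
  have hhd : DiffContOnCl ℂ h (ball w r) :=
    ((hg.mono hsub).const_mul I).cexp.diffContOnCl_ball subset_rfl
  have habs : ∀ x ∈ ball (0:ℂ) 1, ‖h x‖ = Real.exp (-(g x).im) := by
    intro x hx
    simp [hh_def, Complex.norm_exp, Complex.mul_re]
  have hbound : ∀ x ∈ sphere w r, ‖h x‖ ≤ Real.exp A := by
    intro x hx
    have hx' : x ∈ ball (0:ℂ) 1 := hsub (sphere_subset_closedBall hx)
    rw [habs x hx']
    exact Real.exp_le_exp.2 (by linarith [(abs_le.1 (hIm x hx')).1])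
  have hdh : ‖deriv h w‖ ≤ Real.exp A / r :=
    Complex.norm_deriv_le_of_forall_mem_sphere_norm_le hr hhd hbound
  have hw1 : w ∈ ball (0:ℂ) 1 := by rwa [mem_ball_zero_iff]
  have hga : HasDerivAt g (deriv g w) w :=
    (hg.differentiableAt (isOpen_ball.mem_nhds hw1)).hasDerivAt
  have hdh_eq : deriv h w = Complex.exp (I * g w) * (I * deriv g w) :=
    ((hga.const_mul I).cexp).deriv
  have hhw : ‖Complex.exp (I * g w)‖ = Real.exp (-(g w).im) := habs w hw1
  have hexp_ge : Real.exp (-A) ≤ Real.exp (-(g w).im) :=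
    Real.exp_le_exp.2 (by linarith [(abs_le.1 (hIm w hw1)).2])
  have key : Real.exp (-(g w).im) * ‖deriv g w‖ ≤ Real.exp A / r := by
    calc Real.exp (-(g w).im) * ‖deriv g w‖
        = ‖deriv h w‖ := by
          rw [hdh_eq]
          simp [hhw, norm_mul, Complex.norm_I]
      _ ≤ Real.exp A / r := hdh
  have h1 : Real.exp (-A) * ‖deriv g w‖ ≤ Real.exp A / r :=
    le_trans (by nlinarith [norm_nonneg (deriv g w)]) key
  have h2 : ‖deriv g w‖ ≤ Real.exp A / r * Real.exp A := by
    have := mul_le_mul_of_nonneg_right h1 (Real.exp_pos A).le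
    rw [mul_comm (Real.exp (-A)) _, mul_assoc, ← Real.exp_add] at this
    simpa using this
  calc ‖deriv g w‖ ≤ Real.exp A / r * Real.exp A := h2
    _ = 2 * Real.exp (2 * A) / (1 - ‖w‖) := by
        rw [hr_def, show Real.exp (2 * A) = Real.exp A * Real.exp A by
          rw [← Real.exp_add]; ring_nf]
        have : ‖w‖ < 1 := hw
        field_simp
/-- A holomorphic function `g` on the unit disc with `|Im g| ≤ A` satisfies
`|g(z)| ≤ B + C·log((1+|z|)/(1-|z|))` for some constants `B, C > 0`. -/
theorem stmt2 (g : ℂ → ℂ) (A : ℝ)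
    (hg : DifferentiableOn ℂ g (ball (0:ℂ) 1))
    (hIm : ∀ z ∈ ball (0:ℂ) 1, |(g z).im| ≤ A) :
    ∃ B C : ℝ, 0 < B ∧ 0 < C ∧ ∀ z ∈ ball (0:ℂ) 1,
      ‖g z‖ ≤ B + C * Real.log ((1 + ‖z‖) / (1 - ‖z‖)) := by
  set M : ℝ := 2 * Real.exp (2 * A) with hM
  have hMpos : 0 < M := by positivity
  have hderiv := deriv_bound_aux g A hg hIm
  refine ⟨‖g 0‖ + 1, M + 1, by positivity, by positivity, ?_⟩
  intro z hz
  have hρ : ‖z‖ < 1 := mem_ball_zero_iff.1 hz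
  set ρ : ℝ := ‖z‖ with hρ_def
  have hρ0 : 0 ≤ ρ := norm_nonneg z
  -- membership of the segment
  have hmem : ∀ t ∈ Set.Icc (0:ℝ) 1, (t : ℝ) • z ∈ ball (0:ℂ) 1 := by
    intro t ht
    rw [mem_ball_zero_iff, norm_smul, Real.norm_eq_abs, _root_.abs_of_nonneg ht.1]
    calc t * ‖z‖ ≤ 1 * ‖z‖ := by
          exact mul_le_mul_of_nonneg_right ht.2 (norm_nonneg z)
      _ < 1 := by simpa using hρ
  -- continuity of deriv g on the ball
  have han : AnalyticOnNhd ℂ g (ball (0:ℂ) 1) := hg.analyticOnNhd isOpen_ball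
  have hdercont : ContinuousOn (deriv g) (ball (0:ℂ) 1) := han.deriv.continuousOn
  -- FTC
  have hft : ∀ t ∈ Set.Icc (0:ℝ) 1,
      HasDerivAt (fun s : ℝ => g (s • z)) (z • deriv g (t • z)) t := by
    intro t ht
    have h1 : HasDerivAt (fun s : ℝ => s • z) z t := by
      simpa using (hasDerivAt_id t).smul_const z
    have h2 : HasDerivAt g (deriv g (t • z)) (t • z) :=
      (hg.differentiableAt (isOpen_ball.mem_nhds (hmem t ht))).hasDerivAt
    exact h2.scomp t h1
  have hcont : ContinuousOn (fun t : ℝ => z • deriv g (t • z)) (Set.Icc 0 1) := by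
    apply ContinuousOn.smul (f := fun _ : ℝ => z) (g := fun t : ℝ => deriv g (t • z)) continuousOn_const
    exact hdercont.comp (by fun_prop) (fun t ht => hmem t ht)
  have hint : IntervalIntegrable (fun t : ℝ => z • deriv g (t • z))
      MeasureTheory.volume 0 1 := by
    apply ContinuousOn.intervalIntegrable
    rwa [Set.uIcc_of_le zero_le_one]
  have hftc : ∫ t in (0:ℝ)..1, z • deriv g (t • z) = g z - g 0 := by
    have := intervalIntegral.integral_eq_sub_of_hasDerivAt
      (f := fun s : ℝ => g (s • z)) (f' := fun t : ℝ => z • deriv g (t • z))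
      (by intro t ht; rw [Set.uIcc_of_le zero_le_one] at ht; exact hft t ht) hint
    simpa using this
  -- the bound function and its integral
  have h1ρ : 0 < 1 - ρ := by linarith
  have hbdd_int : ∫ t in (0:ℝ)..1, M * ρ / (1 - t * ρ) = -(M * Real.log (1 - ρ)) := by
    have hF : ∀ t ∈ Set.uIcc (0:ℝ) 1,
        HasDerivAt (fun s : ℝ => -(M * Real.log (1 - s * ρ))) (M * ρ / (1 - t * ρ)) t := by
      intro t ht
      rw [Set.uIcc_of_le zero_le_one] at ht
      have htρ : 0 < 1 - t * ρ := by nlinarith [ht.1, ht.2]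
      have hin : HasDerivAt (fun s : ℝ => 1 - s * ρ) (-ρ) t := by
        simpa using ((hasDerivAt_id t).mul_const ρ).const_sub 1
      have hlog : HasDerivAt (fun s : ℝ => Real.log (1 - s * ρ)) ((1 - t * ρ)⁻¹ * (-ρ)) t :=
        (Real.hasDerivAt_log htρ.ne').comp (h₂ := Real.log) t hin
      have := (hlog.const_mul M).neg
      refine this.congr_deriv ?_
      ring
    have hcont' : IntervalIntegrable (fun t : ℝ => M * ρ / (1 - t * ρ))
        MeasureTheory.volume 0 1 := by
      apply ContinuousOn.intervalIntegrable
      apply ContinuousOn.div continuousOn_const (by fun_prop)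
      intro t ht
      rw [Set.uIcc_of_le zero_le_one] at ht
      nlinarith [ht.1, ht.2]
    have := intervalIntegral.integral_eq_sub_of_hasDerivAt hF hcont'
    rw [this]
    simp
  -- norm bound on the integral
  have hnorm : ‖∫ t in (0:ℝ)..1, z • deriv g (t • z)‖ ≤ -(M * Real.log (1 - ρ)) := by
    have hb : IntervalIntegrable (fun t : ℝ => M * ρ / (1 - t * ρ))
        MeasureTheory.volume 0 1 := by
      apply ContinuousOn.intervalIntegrable
      apply ContinuousOn.div continuousOn_const (by fun_prop)
      intro t ht
      rw [Set.uIcc_of_le zero_le_one] at ht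
      nlinarith [ht.1, ht.2]
    have hae : ∀ᵐ t ∂(MeasureTheory.volume.restrict (Set.uIoc (0:ℝ) 1)),
        ‖z • deriv g ((t:ℝ) • z)‖ ≤ M * ρ / (1 - t * ρ) := by
      rw [Set.uIoc_of_le zero_le_one]
      refine (MeasureTheory.ae_restrict_iff' measurableSet_Ioc).2 ?_
      refine MeasureTheory.ae_of_all _ fun t ht => ?_
      have ht' : t ∈ Set.Icc (0:ℝ) 1 := ⟨ht.1.le, ht.2⟩
      have habs : ‖(t:ℝ) • z‖ = t * ρ := by
        rw [norm_smul, Real.norm_eq_abs, _root_.abs_of_nonneg ht'.1]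
      have hd := hderiv ((t:ℝ) • z) (hmem t ht')
      rw [habs] at hd
      have htρ : 0 < 1 - t * ρ := by nlinarith [ht'.1, ht'.2]
      calc ‖z • deriv g ((t:ℝ) • z)‖ = ρ * ‖deriv g ((t:ℝ) • z)‖ := by
            rw [norm_smul]
        _ ≤ ρ * (M / (1 - t * ρ)) := by
            exact mul_le_mul_of_nonneg_left hd hρ0
        _ = M * ρ / (1 - t * ρ) := by ring
    calc ‖∫ t in (0:ℝ)..1, z • deriv g (t • z)‖
        ≤ |∫ t in (0:ℝ)..1, M * ρ / (1 - t * ρ)| :=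
          intervalIntegral.norm_integral_le_abs_of_norm_le hae hb
      _ = -(M * Real.log (1 - ρ)) := by
          rw [hbdd_int, _root_.abs_of_nonneg]
          nlinarith [Real.log_nonpos (by linarith : (0:ℝ) ≤ 1 - ρ)
            (by linarith : 1 - ρ ≤ 1), hMpos.le]
  rw [hftc] at hnorm
  -- final assembly
  have hlog_nonneg : 0 ≤ Real.log ((1 + ρ) / (1 - ρ)) := by
    apply Real.log_nonneg
    rw [le_div_iff₀ h1ρ]
    linarith
  have hlog_le : -Real.log (1 - ρ) ≤ Real.log ((1 + ρ) / (1 - ρ)) := by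
    rw [← Real.log_inv]
    apply Real.log_le_log (by positivity)
    rw [inv_eq_one_div, div_le_div_iff₀ h1ρ h1ρ]
    nlinarith
  calc ‖g z‖ = ‖g 0 + (g z - g 0)‖ := by ring_nf
    _ ≤ ‖g 0‖ + ‖g z - g 0‖ := norm_add_le _ _
    _ ≤ ‖g 0‖ + -(M * Real.log (1 - ρ)) := by
        exact add_le_add_right hnorm _
    _ = ‖g 0‖ + M * (-Real.log (1 - ρ)) := by ring
    _ ≤ ‖g 0‖ + M * Real.log ((1 + ρ) / (1 - ρ)) := by
        exact add_le_add_right (mul_le_mul_of_nonneg_left hlog_le hMpos.le) _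
    _ ≤ ‖g 0‖ + 1 + (M + 1) * Real.log ((1 + ρ) / (1 - ρ)) := by
        nlinarith
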